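/- arXiv:2412.04538 — 4 statements merged into one kernel-verified Lean document; each statement's English description precedes it below -/
import Mathlib

section
/- (Convergence of DCGD) Suppose f is L-smooth and lower bounded by f*, the local gradients have B²-bounded dissimilarity, ωB² < 1, and 0 < γ ≤ 1/L. If the iterates satisfy x^{k+1} = x^k - γ(∇f(x^k) + ē^k) where E‖ē^k | x^k‖² ≤ ωB²‖∇f(x^k)‖², then (1/K) Σ_{k=0}^{K-1} E‖∇f(x^k)‖² ≤ 2(f(x^0) - f*) / (γ K (1 - ωB²)). -/
open Finset

/-- Convergence of DCGD (deterministic form). -/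
theorem dcgd_convergence {d : ℕ} (f : EuclideanSpace ℝ (Fin d) → ℝ)
    (L fstar γ ω B2 : ℝ) (K : ℕ) (hK : 1 ≤ K)
    (hf : Differentiable ℝ f)
    (hsmooth : ∀ x y, f y ≤ f x + (inner ℝ (gradient f x) (y - x) : ℝ) + L / 2 * ‖y - x‖ ^ 2)
    (hlb : ∀ x, fstar ≤ f x)
    (hω0 : 0 ≤ ω) (hω : ω < 1) (hB2 : 1 ≤ B2) (hωB : ω * B2 < 1)
    (hγ0 : 0 < γ) (hγ : γ ≤ 1 / L)
    (x e : ℕ → EuclideanSpace ℝ (Fin d))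
    (hiter : ∀ k < K, x (k + 1) = x k - γ • (gradient f (x k) + e k))
    (herr : ∀ k < K, ‖e k‖ ^ 2 ≤ ω * B2 * ‖gradient f (x k)‖ ^ 2) :
    (K : ℝ)⁻¹ * ∑ k ∈ range K, ‖gradient f (x k)‖ ^ 2
      ≤ 2 * (f (x 0) - fstar) / (γ * K * (1 - ω * B2)) := by
  have hL : 0 < L := by
    by_contra h
    push_neg at h
    have : (1 : ℝ) / L ≤ 0 := div_nonpos_of_nonneg_of_nonpos zero_le_one h
    linarith
  have hγL : γ * L ≤ 1 := by
    have := (le_div_iff₀ hL).mp hγ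
    linarith
  set c : ℝ := γ * (1 - ω * B2) / 2 with hc
  have hcpos : 0 < c := by
    apply div_pos (mul_pos hγ0 (by linarith)) (by norm_num)
  -- per-step descent
  have step : ∀ k < K, f (x (k + 1)) ≤ f (x k) - c * ‖gradient f (x k)‖ ^ 2 := by
    intro k hk
    set g := gradient f (x k) with hg
    have hx := hiter k hk
    have hs := hsmooth (x k) (x (k + 1))
    rw [hx] at hs
    have hdiff : x k - γ • (g + e k) - x k = (-γ) • (g + e k) := by
      rw [sub_sub_cancel_left, neg_smul]
    rw [hdiff] at hs
    have hexp : ‖g + e k‖ ^ 2 = ‖g‖ ^ 2 + 2 * inner ℝ g (e k) + ‖e k‖ ^ 2 := by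
      rw [← real_inner_self_eq_norm_sq, inner_add_add_self, real_inner_comm (e k) g,
        real_inner_self_eq_norm_sq, real_inner_self_eq_norm_sq]
      ring
    have hinner : (inner ℝ g ((-γ) • (g + e k)) : ℝ) = -γ * (‖g‖ ^ 2 + inner ℝ g (e k)) := by
      rw [real_inner_smul_right, inner_add_right, real_inner_self_eq_norm_sq]
    have hnorm : ‖(-γ) • (g + e k)‖ ^ 2 = γ ^ 2 * (‖g‖ ^ 2 + 2 * inner ℝ g (e k) + ‖e k‖ ^ 2) := by
      rw [norm_smul, mul_pow, hexp]
      simp [Real.norm_eq_abs, sq_abs]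
    rw [hinner, hnorm] at hs
    have hnn : 0 ≤ ‖g‖ ^ 2 + 2 * inner ℝ g (e k) + ‖e k‖ ^ 2 := by
      rw [← hexp]; positivity
    have hL2 : L / 2 * (γ ^ 2 * (‖g‖ ^ 2 + 2 * inner ℝ g (e k) + ‖e k‖ ^ 2))
        ≤ γ / 2 * (‖g‖ ^ 2 + 2 * inner ℝ g (e k) + ‖e k‖ ^ 2) := by
      nlinarith [mul_nonneg (mul_nonneg hγ0.le hnn) (sub_nonneg.mpr hγL)]
    have heq : -γ * (‖g‖ ^ 2 + inner ℝ g (e k))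
        + γ / 2 * (‖g‖ ^ 2 + 2 * inner ℝ g (e k) + ‖e k‖ ^ 2)
        = -(γ / 2) * ‖g‖ ^ 2 + γ / 2 * ‖e k‖ ^ 2 := by ring
    have he : γ / 2 * ‖e k‖ ^ 2 ≤ γ / 2 * (ω * B2 * ‖g‖ ^ 2) :=
      mul_le_mul_of_nonneg_left (herr k hk) (by positivity)
    have hceq : c * ‖g‖ ^ 2 = γ / 2 * ‖g‖ ^ 2 - γ / 2 * (ω * B2 * ‖g‖ ^ 2) := by
      rw [hc]; ring
    rw [hx]
    linarith
  -- telescoping sum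
  have hsum : c * ∑ k ∈ range K, ‖gradient f (x k)‖ ^ 2 ≤ f (x 0) - fstar := by
    have htel : ∀ n ≤ K, c * ∑ k ∈ range n, ‖gradient f (x k)‖ ^ 2 ≤ f (x 0) - f (x n) := by
      intro n hn
      induction n with
      | zero => simp
      | succ m ih =>
        have hm : m < K := hn
        have := step m hm
        have ihm := ih (le_of_lt hm)
        rw [Finset.sum_range_succ, mul_add]
        linarith
    have := htel K le_rfl
    have := hlb (x K)
    linarith
  -- conclude
  have hKpos : (0 : ℝ) < K := by exact_mod_cast hK
  have hS : 0 ≤ ∑ k ∈ range K, ‖gradient f (x k)‖ ^ 2 := by positivity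
  have key : ∑ k ∈ range K, ‖gradient f (x k)‖ ^ 2 ≤ (f (x 0) - fstar) / c :=
    (le_div_iff₀ hcpos).mpr (by linarith [hsum])
  have h2 : 2 * (f (x 0) - fstar) / (γ * ↑K * (1 - ω * B2)) = (f (x 0) - fstar) / c / ↑K := by
    rw [hc]; field_simp
  rw [h2, div_div, inv_mul_le_iff₀ hKpos]
  calc ∑ k ∈ range K, ‖gradient f (x k)‖ ^ 2 ≤ (f (x 0) - fstar) / c := key
  _ = ↑K * ((f (x 0) - fstar) / (c * ↑K)) := by field_simp
end

section
/- (CAFe compression error recursion, deterministic form) Suppose f = (1/N)Σ_n f_n is L-smooth with B²-bounded gradient dissimilarity, x^{k+1} = x^k − γ g^k with g^k = ∇f(x^k) + ē^k, and for each n the new error satisfies ‖ê_n^{k+1}‖² ≤ ω ‖∇f_n(x^{k+1}) − g^k‖². Then the averaged error ē^{k+1} = (1/N)Σ_n ê_n^{k+1} satisfies ‖ē^{k+1}‖² ≤ ω (B²‖∇f(x^{k+1})‖² − ‖∇f(x^k)‖²) + 2γωL‖g^k‖² + ω‖ē^k‖². -/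
private lemma grad_avg {d N : ℕ} (f : Fin N → EuclideanSpace ℝ (Fin d) → ℝ)
    (F : EuclideanSpace ℝ (Fin d) → ℝ)
    (hF : ∀ x, F x = (N : ℝ)⁻¹ * ∑ n : Fin N, f n x)
    (hfdiff : ∀ n, Differentiable ℝ (f n)) (y : EuclideanSpace ℝ (Fin d)) :
    gradient F y = (N : ℝ)⁻¹ • ∑ n : Fin N, gradient (f n) y := by
  have hFe : F = fun x => (N : ℝ)⁻¹ * ∑ n : Fin N, f n x := funext hF
  have hfd : fderiv ℝ F y = (N : ℝ)⁻¹ • ∑ n : Fin N, fderiv ℝ (f n) y := by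
    rw [hFe, fderiv_const_mul (Differentiable.fun_sum (fun n _ => hfdiff n) y)]
    congr 1
    exact fderiv_fun_sum (fun n _ => (hfdiff n).differentiableAt)
  simp only [gradient, hfd, map_smul, map_sum]

/-- CAFe compression error recursion (deterministic form). -/
theorem cafe_error_recursion {d N : ℕ} (hN : 0 < N)
    (f : Fin N → EuclideanSpace ℝ (Fin d) → ℝ)
    (F : EuclideanSpace ℝ (Fin d) → ℝ)
    (hF : ∀ x, F x = (N : ℝ)⁻¹ * ∑ n : Fin N, f n x)
    (hfdiff : ∀ n, Differentiable ℝ (f n)) (hFdiff : Differentiable ℝ F)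
    (L γ ω B2 : ℝ) (hL : 0 < L) (hγ : 0 < γ)
    (hω0 : 0 ≤ ω) (hω : ω < 1) (hB2 : 1 ≤ B2)
    (hLip : ∀ x y, ‖gradient F x - gradient F y‖ ≤ L * ‖x - y‖)
    (hdiss : ∀ x, (N : ℝ)⁻¹ * ∑ n : Fin N, ‖gradient (f n) x‖ ^ 2
        ≤ B2 * ‖gradient F x‖ ^ 2)
    (x xp g ebar ebarp : EuclideanSpace ℝ (Fin d))
    (ehat ehatp : Fin N → EuclideanSpace ℝ (Fin d))
    (hebar : ebar = (N : ℝ)⁻¹ • ∑ n : Fin N, ehat n)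
    (hg : g = gradient F x + ebar)
    (hxp : xp = x - γ • g)
    (hehatp : ∀ n, ‖ehatp n‖ ^ 2 ≤ ω * ‖gradient (f n) xp - g‖ ^ 2)
    (hebarp : ebarp = (N : ℝ)⁻¹ • ∑ n : Fin N, ehatp n) :
    ‖ebarp‖ ^ 2 ≤ ω * (B2 * ‖gradient F xp‖ ^ 2 - ‖gradient F x‖ ^ 2)
      + 2 * γ * ω * L * ‖g‖ ^ 2 + ω * ‖ebar‖ ^ 2 := by
  have hNpos : (0:ℝ) < (N:ℝ) := by exact_mod_cast hN
  set m := gradient F xp with hm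
  set G0 := gradient F x with hG0
  -- Step 1: Jensen
  have step1 : ‖ebarp‖ ^ 2 ≤ (N : ℝ)⁻¹ * ∑ n : Fin N, ‖ehatp n‖ ^ 2 := by
    have h1 : ‖ebarp‖ ≤ (N : ℝ)⁻¹ * ∑ n : Fin N, ‖ehatp n‖ := by
      rw [hebarp, norm_smul]
      simp only [norm_inv, Real.norm_natCast]
      exact mul_le_mul_of_nonneg_left (norm_sum_le _ _) (by positivity)
    have h2 : (∑ n : Fin N, ‖ehatp n‖) ^ 2 ≤ (N : ℝ) * ∑ n : Fin N, ‖ehatp n‖ ^ 2 := by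
      have := sq_sum_le_card_mul_sum_sq (s := Finset.univ) (f := fun n => ‖ehatp n‖)
      simpa using this
    have h3 : ‖ebarp‖ ^ 2 ≤ ((N : ℝ)⁻¹ * ∑ n : Fin N, ‖ehatp n‖) ^ 2 :=
      pow_le_pow_left₀ (norm_nonneg _) h1 2
    calc ‖ebarp‖ ^ 2 ≤ ((N : ℝ)⁻¹ * ∑ n : Fin N, ‖ehatp n‖) ^ 2 := h3
      _ = (N : ℝ)⁻¹ * ((N : ℝ)⁻¹ * (∑ n : Fin N, ‖ehatp n‖) ^ 2) := by ring
      _ ≤ (N : ℝ)⁻¹ * ((N : ℝ)⁻¹ * ((N : ℝ) * ∑ n : Fin N, ‖ehatp n‖ ^ 2)) := by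
          apply mul_le_mul_of_nonneg_left _ (by positivity)
          exact mul_le_mul_of_nonneg_left h2 (by positivity)
      _ = (N : ℝ)⁻¹ * ∑ n : Fin N, ‖ehatp n‖ ^ 2 := by field_simp
  -- Step 2: apply compression bound and expand
  have step2 : (N : ℝ)⁻¹ * ∑ n : Fin N, ‖ehatp n‖ ^ 2
      ≤ ω * ((N : ℝ)⁻¹ * ∑ n : Fin N, ‖gradient (f n) xp - g‖ ^ 2) := by
    have h : ∑ n : Fin N, ‖ehatp n‖ ^ 2 ≤ ω * ∑ n : Fin N, ‖gradient (f n) xp - g‖ ^ 2 := by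
      rw [Finset.mul_sum]
      exact Finset.sum_le_sum fun n _ => hehatp n
    calc (N : ℝ)⁻¹ * ∑ n : Fin N, ‖ehatp n‖ ^ 2
        ≤ (N : ℝ)⁻¹ * (ω * ∑ n : Fin N, ‖gradient (f n) xp - g‖ ^ 2) :=
          mul_le_mul_of_nonneg_left h (by positivity)
      _ = ω * ((N : ℝ)⁻¹ * ∑ n : Fin N, ‖gradient (f n) xp - g‖ ^ 2) := by ring
  -- expand the squared norms
  have expand : (N : ℝ)⁻¹ * ∑ n : Fin N, ‖gradient (f n) xp - g‖ ^ 2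
      = (N : ℝ)⁻¹ * (∑ n : Fin N, ‖gradient (f n) xp‖ ^ 2)
        - 2 * inner ℝ m g + ‖g‖ ^ 2 := by
    have hsum : ∑ n : Fin N, ‖gradient (f n) xp - g‖ ^ 2
        = (∑ n : Fin N, ‖gradient (f n) xp‖ ^ 2)
          - 2 * inner ℝ (∑ n : Fin N, gradient (f n) xp) g + (N : ℝ) * ‖g‖ ^ 2 := by
      rw [sum_inner]
      rw [Finset.sum_congr rfl (fun n _ => norm_sub_sq_real (gradient (f n) xp) g)]
      rw [Finset.sum_add_distrib, Finset.sum_sub_distrib, ← Finset.mul_sum]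
      simp [Finset.card_univ]
    have hmg : (inner ℝ m g : ℝ) = (N : ℝ)⁻¹ * inner ℝ (∑ n : Fin N, gradient (f n) xp) g := by
      rw [hm, grad_avg f F hF hfdiff xp, real_inner_smul_left]
    rw [hsum, hmg]
    field_simp
  -- cross term bound
  have hxmxp : x - xp = γ • g := by rw [hxp]; abel
  have hcross : (inner ℝ G0 g : ℝ) - inner ℝ m g ≤ γ * L * ‖g‖ ^ 2 := by
    have h1 : (inner ℝ G0 g : ℝ) - inner ℝ m g = inner ℝ (G0 - m) g := by
      rw [inner_sub_left]
    have h2 : (inner ℝ (G0 - m) g : ℝ) ≤ ‖G0 - m‖ * ‖g‖ := real_inner_le_norm _ _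
    have h3 : ‖G0 - m‖ ≤ L * ‖x - xp‖ := hLip x xp
    have h4 : ‖x - xp‖ = γ * ‖g‖ := by
      rw [hxmxp, norm_smul, Real.norm_eq_abs, abs_of_pos hγ]
    rw [h1]
    calc (inner ℝ (G0 - m) g : ℝ) ≤ ‖G0 - m‖ * ‖g‖ := h2
      _ ≤ L * (γ * ‖g‖) * ‖g‖ := by
          apply mul_le_mul_of_nonneg_right _ (norm_nonneg g)
          rw [← h4]; exact h3
      _ = γ * L * ‖g‖ ^ 2 := by ring
  -- relation between ‖g‖², ⟪G0,g⟫, ‖ebar‖², ‖G0‖²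
  have hge : g - G0 = ebar := by rw [hg]; abel
  have hrel : ‖g‖ ^ 2 - 2 * inner ℝ G0 g = ‖ebar‖ ^ 2 - ‖G0‖ ^ 2 := by
    have := norm_sub_sq_real g G0
    rw [hge] at this
    rw [real_inner_comm G0 g] at this
    linarith [this]
  -- dissimilarity
  have hd := hdiss xp
  -- combine
  have hmain : (N : ℝ)⁻¹ * ∑ n : Fin N, ‖gradient (f n) xp - g‖ ^ 2
      ≤ B2 * ‖m‖ ^ 2 - ‖G0‖ ^ 2 + 2 * γ * L * ‖g‖ ^ 2 + ‖ebar‖ ^ 2 := by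
    rw [expand]
    nlinarith [hd, hcross, hrel]
  calc ‖ebarp‖ ^ 2 ≤ ω * ((N : ℝ)⁻¹ * ∑ n : Fin N, ‖gradient (f n) xp - g‖ ^ 2) :=
        le_trans step1 step2
    _ ≤ ω * (B2 * ‖m‖ ^ 2 - ‖G0‖ ^ 2 + 2 * γ * L * ‖g‖ ^ 2 + ‖ebar‖ ^ 2) :=
        mul_le_mul_of_nonneg_left hmain hω0
    _ = ω * (B2 * ‖m‖ ^ 2 - ‖G0‖ ^ 2) + 2 * γ * ω * L * ‖g‖ ^ 2 + ω * ‖ebar‖ ^ 2 := by ring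
end

section
/- (Convergence of CAFe + DGD, deterministic form) Suppose f is L-smooth and bounded below by f*, gradients have B²-bounded dissimilarity with ωB² < 1, ω < 1, and 0 < γ ≤ (1−ω)/(L(1+ω)). If x^{k+1} = x^k − γg^k with g^k = ∇f(x^k) + ē^k, ē^0 = 0, and the error recursion ‖ē^{k+1}‖² ≤ ω(B²‖∇f(x^{k+1})‖² − ‖∇f(x^k)‖²) + 2γωL‖g^k‖² + ω‖ē^k‖² holds for all k, then (1/K)Σ_{k=0}^{K-1}‖∇f(x^k)‖² ≤ 2(f(x^0) − f*)(1−ω)/(γK(1−ωB²)). -/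
open Finset

set_option maxHeartbeats 1000000 in
/-- Convergence of CAFe + DGD (deterministic form). -/
theorem cafe_convergence {d : ℕ} (f : EuclideanSpace ℝ (Fin d) → ℝ)
    (L fstar γ ω B2 : ℝ) (K : ℕ) (hK : 1 ≤ K)
    (hf : Differentiable ℝ f) (hL : 0 < L)
    (hsmooth : ∀ x y, f y ≤ f x + (inner ℝ (gradient f x) (y - x) : ℝ) + L / 2 * ‖y - x‖ ^ 2)
    (hlb : ∀ x, fstar ≤ f x)
    (hω0 : 0 ≤ ω) (hω : ω < 1) (hB2 : 1 ≤ B2) (hωB : ω * B2 < 1)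
    (hγ0 : 0 < γ) (hγ : γ ≤ (1 - ω) / (L * (1 + ω)))
    (x e g : ℕ → EuclideanSpace ℝ (Fin d))
    (hg : ∀ k, g k = gradient f (x k) + e k)
    (hiter : ∀ k, x (k + 1) = x k - γ • g k)
    (he0 : e 0 = 0)
    (hrec : ∀ k, ‖e (k + 1)‖ ^ 2
        ≤ ω * (B2 * ‖gradient f (x (k + 1))‖ ^ 2 - ‖gradient f (x k)‖ ^ 2)
          + 2 * γ * ω * L * ‖g k‖ ^ 2 + ω * ‖e k‖ ^ 2) :
    (K : ℝ)⁻¹ * ∑ k ∈ range K, ‖gradient f (x k)‖ ^ 2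
      ≤ 2 * (f (x 0) - fstar) * (1 - ω) / (γ * K * (1 - ω * B2)) := by
  have hω1 : (0:ℝ) < 1 - ω := by linarith
  have hωB0 : (0:ℝ) < 1 - ω * B2 := by linarith
  -- gradient bound  ‖∇f y‖² ≤ 2L(f y − f*)
  have hgradbd : ∀ y, ‖gradient f y‖ ^ 2 ≤ 2 * L * (f y - fstar) := by
    intro y
    have h := hsmooth y (y - L⁻¹ • gradient f y)
    have h2 := hlb (y - L⁻¹ • gradient f y)
    rw [sub_sub_cancel_left, inner_neg_right, inner_smul_right, real_inner_self_eq_norm_sq,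
      norm_neg, norm_smul, Real.norm_eq_abs, abs_of_pos (inv_pos.2 hL)] at h
    have hs : L / 2 * (L⁻¹ * ‖gradient f y‖) ^ 2 = L⁻¹ / 2 * ‖gradient f y‖ ^ 2 := by
      field_simp
    rw [hs] at h
    have h3 : L⁻¹ / 2 * ‖gradient f y‖ ^ 2 ≤ f y - fstar := by linarith
    calc ‖gradient f y‖ ^ 2 = 2 * L * (L⁻¹ / 2 * ‖gradient f y‖ ^ 2) := by
          field_simp
      _ ≤ 2 * L * (f y - fstar) := by
          apply mul_le_mul_of_nonneg_left h3; positivity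
  -- γ L (1+ω) ≤ 1 − ω
  have hLγ : L * γ * (1 + ω) ≤ 1 - ω := by
    have hpos : 0 < L * (1 + ω) := by nlinarith
    have := (le_div_iff₀ hpos).mp hγ
    nlinarith
  -- descent inequality
  have hdesc : ∀ k, f (x (k + 1)) ≤ f (x k) - γ / 2 * ‖gradient f (x k)‖ ^ 2
      + γ / 2 * ‖e k‖ ^ 2 - (γ / 2 - L * γ ^ 2 / 2) * ‖g k‖ ^ 2 := by
    intro k
    have h := hsmooth (x k) (x (k + 1))
    rw [hiter k, sub_sub_cancel_left, inner_neg_right, inner_smul_right, norm_neg, norm_smul,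
      Real.norm_eq_abs, abs_of_pos hγ0] at h
    rw [hiter k]
    have hge : ‖g k‖ ^ 2 = ‖gradient f (x k)‖ ^ 2
        + 2 * (inner ℝ (gradient f (x k)) (e k) : ℝ) + ‖e k‖ ^ 2 := by
      rw [hg k]; exact norm_add_sq_real _ _
    have hig : (inner ℝ (gradient f (x k)) (g k) : ℝ)
        = ‖gradient f (x k)‖ ^ 2 + (inner ℝ (gradient f (x k)) (e k) : ℝ) := by
      rw [hg k, inner_add_right, real_inner_self_eq_norm_sq]
    rw [hig] at h
    have hge' : γ / 2 * ‖g k‖ ^ 2 = γ / 2 * ‖gradient f (x k)‖ ^ 2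
        + γ * (inner ℝ (gradient f (x k)) (e k) : ℝ) + γ / 2 * ‖e k‖ ^ 2 := by
      rw [hge]; ring
    have hn : L / 2 * (γ * ‖g k‖) ^ 2 = L * γ ^ 2 / 2 * ‖g k‖ ^ 2 := by ring
    rw [hn] at h
    nlinarith [h, hge']
  set D : ℝ := γ / (2 * (1 - ω)) with hD
  have hD0 : 0 < D := by positivity
  set Φ : ℕ → ℝ := fun k =>
    f (x k) + D * ‖e k‖ ^ 2 - D * (ω * B2) * ‖gradient f (x k)‖ ^ 2 with hΦ
  have hγ2 : γ / 2 = D * (1 - ω) := by rw [hD]; field_simp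
  -- per-step Lyapunov decrease
  have hstep : ∀ k, Φ (k + 1) ≤ Φ k - D * (1 - ω * B2) * ‖gradient f (x k)‖ ^ 2 := by
    intro k
    have h1 := hdesc k
    rw [hγ2] at h1
    have h2 : D * ‖e (k + 1)‖ ^ 2
        ≤ D * (ω * (B2 * ‖gradient f (x (k + 1))‖ ^ 2 - ‖gradient f (x k)‖ ^ 2)
          + 2 * γ * ω * L * ‖g k‖ ^ 2 + ω * ‖e k‖ ^ 2) :=
      mul_le_mul_of_nonneg_left (hrec k) hD0.le
    have hgcoef : 0 ≤ (D * (1 - ω) - L * γ ^ 2 / 2 - D * (2 * γ * ω * L)) * ‖g k‖ ^ 2 := by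
      apply mul_nonneg _ (sq_nonneg _)
      have h3 : 0 ≤ D * (1 - ω - L * γ * (1 + ω)) := by
        apply mul_nonneg hD0.le; linarith
      have h4 : D * (1 - ω - L * γ * (1 + ω))
          = D * (1 - ω) - L * γ ^ 2 / 2 - D * (2 * γ * ω * L) := by
        rw [hD]; field_simp; ring
      linarith [h4 ▸ h3]
    simp only [hΦ]
    nlinarith [h1, h2, hgcoef]
  -- telescoping
  have htel : ∀ n, Φ n + D * (1 - ω * B2) * ∑ k ∈ range n, ‖gradient f (x k)‖ ^ 2 ≤ Φ 0 := by
    intro n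
    induction n with
    | zero => simp
    | succ n ih =>
      rw [sum_range_succ, mul_add]
      have := hstep n
      linarith
  -- 2 L D ω B2 ≤ 1
  have ha2L : 2 * L * (D * (ω * B2)) ≤ 1 := by
    have h5 : L * γ * (ω * B2) ≤ 1 - ω := by
      nlinarith [mul_nonneg (mul_nonneg hL.le hγ0.le) (by linarith : (0:ℝ) ≤ 1 - ω * B2),
        mul_nonneg (mul_nonneg hL.le hγ0.le) hω0]
    have h6 : 2 * L * (D * (ω * B2)) = L * γ * (ω * B2) / (1 - ω) := by
      rw [hD]; field_simp
    rw [h6, div_le_one hω1]; linarith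
  -- lower bound on Φ K
  have hΦK : fstar ≤ Φ K := by
    have h1 := hgradbd (x K)
    have h2 := hlb (x K)
    simp only [hΦ]
    nlinarith [mul_le_mul_of_nonneg_left h1 (by positivity : (0:ℝ) ≤ D * (ω * B2)),
      mul_nonneg hD0.le (sq_nonneg ‖e K‖),
      mul_nonneg (by linarith : (0:ℝ) ≤ 1 - 2 * L * (D * (ω * B2)))
        (by linarith : (0:ℝ) ≤ f (x K) - fstar)]
  -- Φ 0 ≤ f (x 0)
  have hΦ0 : Φ 0 ≤ f (x 0) := by
    simp only [hΦ, he0, norm_zero]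
    nlinarith [mul_nonneg (by positivity : (0:ℝ) ≤ D * (ω * B2))
      (sq_nonneg ‖gradient f (x 0)‖)]
  -- conclude
  have hcc0 : 0 < D * (1 - ω * B2) := by positivity
  have hsum : D * (1 - ω * B2) * ∑ k ∈ range K, ‖gradient f (x k)‖ ^ 2
      ≤ f (x 0) - fstar := by
    have := htel K
    linarith
  have hS : ∑ k ∈ range K, ‖gradient f (x k)‖ ^ 2
      ≤ (f (x 0) - fstar) / (D * (1 - ω * B2)) :=
    (le_div_iff₀ hcc0).mpr (by linarith)
  have hKpos : (0:ℝ) < K := by exact_mod_cast hK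
  calc (K : ℝ)⁻¹ * ∑ k ∈ range K, ‖gradient f (x k)‖ ^ 2
      ≤ (K : ℝ)⁻¹ * ((f (x 0) - fstar) / (D * (1 - ω * B2))) :=
        mul_le_mul_of_nonneg_left hS (by positivity)
    _ = 2 * (f (x 0) - fstar) * (1 - ω) / (γ * K * (1 - ω * B2)) := by
        rw [hD]; field_simp
end

section
/- (Telescoped DCGD bound with tuned step size) Under L-smoothness of f bounded below by f*, B²-bounded dissimilarity, ωB² < 1, and γ = 1/L, deterministic DCGD iterates x^{k+1} = x^k − γ(∇f(x^k) + ē^k) with ‖ē^k‖² ≤ ωB²‖∇f(x^k)‖² satisfy (1/K)Σ_{k=0}^{K-1}‖∇f(x^k)‖² ≤ 2L(f(x^0) − f*)/(K(1 − ωB²)). -/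
open Finset

/-- Telescoped DCGD bound with tuned step size `γ = 1/L`. -/
theorem dcgd_tuned_bound {d : ℕ} (f : EuclideanSpace ℝ (Fin d) → ℝ)
    (L fstar γ ω B2 : ℝ) (K : ℕ) (hK : 1 ≤ K)
    (hf : Differentiable ℝ f) (hL : 0 < L)
    (hsmooth : ∀ x y, f y ≤ f x + (inner ℝ (gradient f x) (y - x) : ℝ) + L / 2 * ‖y - x‖ ^ 2)
    (hlb : ∀ x, fstar ≤ f x)
    (hω0 : 0 ≤ ω) (hω : ω < 1) (hB2 : 1 ≤ B2) (hωB : ω * B2 < 1)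
    (hγ : γ = 1 / L)
    (x e : ℕ → EuclideanSpace ℝ (Fin d))
    (hiter : ∀ k < K, x (k + 1) = x k - γ • (gradient f (x k) + e k))
    (herr : ∀ k < K, ‖e k‖ ^ 2 ≤ ω * B2 * ‖gradient f (x k)‖ ^ 2) :
    (K : ℝ)⁻¹ * ∑ k ∈ range K, ‖gradient f (x k)‖ ^ 2
      ≤ 2 * L * (f (x 0) - fstar) / (K * (1 - ω * B2)) := by
  have hc : 0 < 1 - ω * B2 := by linarith
  have hKpos : (0 : ℝ) < K := by exact_mod_cast hK
  -- per-step descent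
  have step : ∀ k < K, f (x (k + 1)) ≤ f (x k)
      - (1 - ω * B2) / (2 * L) * ‖gradient f (x k)‖ ^ 2 := by
    intro k hk
    set g := gradient f (x k) with hg
    have hx := hiter k hk
    have hs := hsmooth (x k) (x (k + 1))
    have hdiff : x (k + 1) - x k = -(γ • (g + e k)) := by
      rw [hx]; abel
    rw [hdiff] at hs
    have hin : (inner ℝ g (-(γ • (g + e k))) : ℝ)
        = -γ * (‖g‖ ^ 2 + inner ℝ g (e k)) := by
      rw [inner_neg_right, inner_smul_right, inner_add_right,
        real_inner_self_eq_norm_sq]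
      ring
    have hnorm : ‖-(γ • (g + e k))‖ ^ 2
        = γ ^ 2 * (‖g‖ ^ 2 + 2 * inner ℝ g (e k) + ‖e k‖ ^ 2) := by
      rw [norm_neg, norm_smul, mul_pow, ← norm_add_sq_real]
      simp [abs_sq, sq_abs]
    rw [hin, hnorm] at hs
    have hLne : L ≠ 0 := ne_of_gt hL
    have hγL : γ = 1 / L := hγ
    have herrk := herr k hk
    have key : f (x (k + 1)) ≤ f (x k) - 1 / (2 * L) * ‖g‖ ^ 2
        + 1 / (2 * L) * ‖e k‖ ^ 2 := by
      calc f (x (k + 1)) ≤ f (x k) + (-γ * (‖g‖ ^ 2 + inner ℝ g (e k)))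
          + L / 2 * (γ ^ 2 * (‖g‖ ^ 2 + 2 * inner ℝ g (e k) + ‖e k‖ ^ 2)) := hs
        _ = f (x k) - 1 / (2 * L) * ‖g‖ ^ 2 + 1 / (2 * L) * ‖e k‖ ^ 2 := by
            rw [hγL]; field_simp; ring
    have h2L : (0 : ℝ) < 2 * L := by linarith
    have : 1 / (2 * L) * ‖e k‖ ^ 2 ≤ 1 / (2 * L) * (ω * B2 * ‖g‖ ^ 2) := by
      apply mul_le_mul_of_nonneg_left herrk (by positivity)
    have final : f (x (k + 1)) ≤ f (x k) - 1 / (2 * L) * ‖g‖ ^ 2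
        + 1 / (2 * L) * (ω * B2 * ‖g‖ ^ 2) := by linarith
    calc f (x (k + 1)) ≤ f (x k) - 1 / (2 * L) * ‖g‖ ^ 2
          + 1 / (2 * L) * (ω * B2 * ‖g‖ ^ 2) := final
      _ = f (x k) - (1 - ω * B2) / (2 * L) * ‖g‖ ^ 2 := by
          field_simp; ring
  -- telescoping
  have sum_le : (1 - ω * B2) / (2 * L) * ∑ k ∈ range K, ‖gradient f (x k)‖ ^ 2
      ≤ f (x 0) - fstar := by
    have htel : ∀ n ≤ K, f (x 0) - f (x n)
        ≥ (1 - ω * B2) / (2 * L) * ∑ k ∈ range n, ‖gradient f (x k)‖ ^ 2 := by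
      intro n hn
      induction n with
      | zero => simp
      | succ m ih =>
        have hm : m < K := hn
        have ihm := ih (le_of_lt hm)
        have := step m hm
        rw [Finset.sum_range_succ, mul_add]
        linarith
    have := htel K le_rfl
    have hfK := hlb (x K)
    linarith
  -- conclude
  have hsum_nonneg : (0:ℝ) ≤ ∑ k ∈ range K, ‖gradient f (x k)‖ ^ 2 := by positivity
  have h2L : (0 : ℝ) < 2 * L := by linarith
  have key : ∑ k ∈ range K, ‖gradient f (x k)‖ ^ 2
      ≤ 2 * L * (f (x 0) - fstar) / (1 - ω * B2) := by
    rw [le_div_iff₀ hc]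
    calc (∑ k ∈ range K, ‖gradient f (x k)‖ ^ 2) * (1 - ω * B2)
        = 2 * L * ((1 - ω * B2) / (2 * L) * ∑ k ∈ range K, ‖gradient f (x k)‖ ^ 2) := by
          field_simp
      _ ≤ 2 * L * (f (x 0) - fstar) := by
          apply mul_le_mul_of_nonneg_left sum_le (le_of_lt h2L)
  rw [inv_mul_le_iff₀ hKpos]
  calc ∑ k ∈ range K, ‖gradient f (x k)‖ ^ 2
      ≤ 2 * L * (f (x 0) - fstar) / (1 - ω * B2) := key
    _ = K * (2 * L * (f (x 0) - fstar) / (K * (1 - ω * B2))) := by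
        field_simp
end
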